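/- With G_ℓ as above (ℓ ≥ 3), every dominating set of G_ℓ of size strictly less than ℓ contains both u and v. -/
import Mathlib


/-- The vertices of the graph `G_ℓ`: the hubs `u` and `v`, the shared triangle
vertices `w i`, and the private triangle vertices `a i` and `b i`. -/
inductive GVert (ℓ : ℕ) : Type
  | u : GVert ℓ
  | v : GVert ℓ
  | w : Fin ℓ → GVert ℓ
  | a : Fin ℓ → GVert ℓ
  | b : Fin ℓ → GVert ℓ
  deriving DecidableEq, Fintype

/-- The edges of `G_ℓ`: triangles `{u, a i, w i}` and `{w i, b i, v}` for each `i`. -/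
def GRel (ℓ : ℕ) : GVert ℓ → GVert ℓ → Prop := fun x y =>
  ∃ i : Fin ℓ,
    (x = .u ∧ y = .a i) ∨ (x = .u ∧ y = .w i) ∨ (x = .a i ∧ y = .w i) ∨
    (x = .w i ∧ y = .b i) ∨ (x = .w i ∧ y = .v) ∨ (x = .b i ∧ y = .v)

/-- The graph `G_ℓ`: `ℓ` pairs of triangles sharing `w i`, all first triangles sharing `u`
and all second triangles sharing `v`. -/
def Gl (ℓ : ℕ) : SimpleGraph (GVert ℓ) := SimpleGraph.fromRel (GRel ℓ)

def IsDominatingSet {V : Type*} (G : SimpleGraph V) (D : Set V) : Prop :=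
  ∀ x : V, ∃ d ∈ D, d = x ∨ G.Adj d x

lemma adj_a {ℓ : ℕ} {d : GVert ℓ} {i : Fin ℓ} (h : (Gl ℓ).Adj d (.a i)) :
    d = .u ∨ d = .w i := by
  rw [Gl, SimpleGraph.fromRel_adj] at h
  obtain ⟨-, h | h⟩ := h <;> obtain ⟨j, h⟩ := h <;>
    rcases h with ⟨h1, h2⟩ | ⟨h1, h2⟩ | ⟨h1, h2⟩ | ⟨h1, h2⟩ | ⟨h1, h2⟩ | ⟨h1, h2⟩ <;>
    simp_all

lemma adj_b {ℓ : ℕ} {d : GVert ℓ} {i : Fin ℓ} (h : (Gl ℓ).Adj d (.b i)) :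
    d = .v ∨ d = .w i := by
  rw [Gl, SimpleGraph.fromRel_adj] at h
  obtain ⟨-, h | h⟩ := h <;> obtain ⟨j, h⟩ := h <;>
    rcases h with ⟨h1, h2⟩ | ⟨h1, h2⟩ | ⟨h1, h2⟩ | ⟨h1, h2⟩ | ⟨h1, h2⟩ | ⟨h1, h2⟩ <;>
    simp_all

lemma card_ge {ℓ : ℕ} {D : Finset (GVert ℓ)}
    (h : ∀ i : Fin ℓ, ∃ d ∈ D, d = GVert.a i ∨ d = GVert.w i) : ℓ ≤ D.card := by
  choose f hf hfd using h
  have hinj : Function.Injective f := by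
    intro i j hij
    rcases hfd i with h1 | h1 <;> rcases hfd j with h2 | h2 <;>
      rw [h1, h2] at hij <;> simp_all
  calc ℓ = (Finset.univ : Finset (Fin ℓ)).card := by simp
    _ ≤ D.card := Finset.card_le_card_of_injOn f (fun i _ => hf i) hinj.injOn

lemma card_ge' {ℓ : ℕ} {D : Finset (GVert ℓ)}
    (h : ∀ i : Fin ℓ, ∃ d ∈ D, d = GVert.b i ∨ d = GVert.w i) : ℓ ≤ D.card := by
  choose f hf hfd using h
  have hinj : Function.Injective f := by
    intro i j hij
    rcases hfd i with h1 | h1 <;> rcases hfd j with h2 | h2 <;>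
      rw [h1, h2] at hij <;> simp_all
  calc ℓ = (Finset.univ : Finset (Fin ℓ)).card := by simp
    _ ≤ D.card := Finset.card_le_card_of_injOn f (fun i _ => hf i) hinj.injOn

theorem Gl_small_dominating_contains_hubs (ℓ : ℕ) (hℓ : 3 ≤ ℓ)
    (D : Finset (GVert ℓ)) (hD : IsDominatingSet (Gl ℓ) ↑D) (hcard : D.card < ℓ) :
    GVert.u ∈ D ∧ GVert.v ∈ D := by
  constructor
  · by_contra hu
    refine absurd hcard (not_lt.2 (card_ge (fun i => ?_)))
    obtain ⟨d, hd, heq | hadj⟩ := hD (.a i)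
    · exact ⟨d, hd, Or.inl heq⟩
    · rcases adj_a hadj with h | h
      · exact absurd (h ▸ hd) hu
      · exact ⟨d, hd, Or.inr h⟩
  · by_contra hv
    refine absurd hcard (not_lt.2 (card_ge' (fun i => ?_)))
    obtain ⟨d, hd, heq | hadj⟩ := hD (.b i)
    · exact ⟨d, hd, Or.inl heq⟩
    · rcases adj_b hadj with h | h
      · exact absurd (h ▸ hd) hv
      · exact ⟨d, hd, Or.inr h⟩
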